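/- arXiv:2401.03600 — 3 statements merged into one kernel-verified Lean document; each statement's English description precedes it below -/
import Mathlib

section
/- If f is holomorphic and injective on the open unit disk with f(0) = 0 and f'(0) = 1, and n ≥ 1, then there exists a holomorphic injective function g on the open unit disk with g(0) = 0, g'(0) = 1, and g(z)^n = f(z^n) for all z in the disk. -/
open Complex Metric

open scoped NNReal ENNReal

lemma aux_series {G : ℂ → ℂ} (hG : DifferentiableOn ℂ G (ball (0:ℂ) 1)) :
    ∃ p : FormalMultilinearSeries ℂ ℂ ℂ, HasFPowerSeriesOnBall G p 0 1 := by
  have key : ∀ r : ℝ≥0, 0 < r → (r : ℝ) < 1 →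
      HasFPowerSeriesOnBall G (cauchyPowerSeries G 0 r) 0 r := fun r hr hr1 =>
    (hG.mono (closedBall_subset_ball (by simpa using hr1))).hasFPowerSeriesOnBall hr
  set p := cauchyPowerSeries G 0 (1/2 : ℝ≥0) with hp
  have hhalf : HasFPowerSeriesOnBall G p 0 (1/2 : ℝ≥0) := key _ (by norm_num) (by norm_num)
  have same : ∀ r : ℝ≥0, 0 < r → (r : ℝ) < 1 → cauchyPowerSeries G 0 r = p := fun r hr hr1 =>
    (key r hr hr1).hasFPowerSeriesAt.eq_formalMultilinearSeries hhalf.hasFPowerSeriesAt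
  refine ⟨p, ?_, one_pos, ?_⟩
  · refine ENNReal.le_of_forall_nnreal_lt fun r hr => ?_
    rcases eq_or_lt_of_le (zero_le : 0 ≤ r) with h0 | h0
    · simp [← h0]
    · have hr1 : (r : ℝ) < 1 := by exact_mod_cast hr
      exact same r h0 hr1 ▸ (key r h0 hr1).r_le
  · intro y hy
    rw [EMetric.mem_ball, edist_zero_right] at hy
    have hy1 : ‖y‖₊ < 1 := by exact_mod_cast (show (‖y‖₊ : ℝ≥0∞) < 1 from hy)
    obtain ⟨r, hr1, hr2⟩ := exists_between hy1
    have h0 : 0 < r := lt_of_le_of_lt (zero_le : (0 : ℝ≥0) ≤ _) hr1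
    have := (key r h0 (by exact_mod_cast hr2)).hasSum
      (y := y) (by rw [EMetric.mem_ball, edist_zero_right]; exact (show (‖y‖₊ : ℝ≥0∞) < r by exact_mod_cast hr1))
    rwa [same r h0 (by exact_mod_cast hr2)] at this

lemma aux_primitive {G : ℂ → ℂ} {p : FormalMultilinearSeries ℂ ℂ ℂ}
    (hp : HasFPowerSeriesOnBall G p 0 1) :
    ∃ V : ℂ → ℂ, ∀ z ∈ ball (0:ℂ) 1, HasDerivAt V (G z) z := by
  classical
  set c : ℕ → ℂ := fun k => match k with
    | 0 => 0
    | (m+1) => p.coeff m / (m+1) with hc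
  set q := FormalMultilinearSeries.ofScalars ℂ c with hqdef
  have hcoeff : ∀ m : ℕ, ‖p.coeff m‖ ≤ ‖p m‖ := by
    intro m
    have h := (p m).le_opNorm (fun _ => (1:ℂ))
    have e : ‖p.coeff m‖ = ‖p m fun _ => (1:ℂ)‖ := rfl
    rw [e]
    simpa using h
  have hrad : 1 ≤ q.radius := by
    refine ENNReal.le_of_forall_nnreal_lt fun r hr => ?_
    have hr1 : (r : ℝ) < 1 := by exact_mod_cast hr
    obtain ⟨C, hC, hbound⟩ := p.norm_mul_pow_le_of_lt_radius (lt_of_lt_of_le hr hp.r_le)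
    refine q.le_radius_of_bound C fun n => ?_
    match n with
    | 0 =>
      have : q 0 = 0 := FormalMultilinearSeries.ofScalars_eq_zero_of_scalar_zero (E := ℂ) (c := c) (n := 0) rfl
      simp [this, hC.le]
    | (m+1) =>
      have h1 : ‖q (m+1)‖ ≤ ‖c (m+1)‖ := FormalMultilinearSeries.ofScalars_norm_le (E := ℂ) (c := c) (n := m+1) (Nat.succ_pos m)
      have h2 : ‖c (m+1)‖ ≤ ‖p m‖ := by
        show ‖p.coeff m / ((m:ℂ)+1)‖ ≤ ‖p m‖
        rw [norm_div, show ((m:ℂ)+1) = ((m+1:ℕ):ℂ) by push_cast; ring,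
          Complex.norm_natCast]
        refine le_trans (div_le_self (norm_nonneg _) ?_) (hcoeff m)
        exact_mod_cast Nat.succ_le_succ (Nat.zero_le m)
      calc ‖q (m+1)‖ * (r:ℝ) ^ (m+1) ≤ ‖p m‖ * ((r:ℝ) ^ m * r) := by
            rw [pow_succ]
            exact mul_le_mul (h1.trans h2) le_rfl (by positivity) (norm_nonneg _)
        _ ≤ ‖p m‖ * (r:ℝ) ^ m := by
            exact mul_le_mul_of_nonneg_left
              (mul_le_of_le_one_right (pow_nonneg r.coe_nonneg m) hr1.le) (norm_nonneg _)
        _ ≤ C := hbound m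
  have hq : HasFPowerSeriesOnBall q.sum q 0 1 :=
    (q.hasFPowerSeriesOnBall (lt_of_lt_of_le one_pos hrad)).mono one_pos hrad
  refine ⟨q.sum, fun z hz => ?_⟩
  have hz' : z ∈ Metric.eball (0:ℂ) 1 := by
    rw [EMetric.mem_ball, edist_zero_right]
    rw [mem_ball_zero_iff] at hz
    exact (show (‖z‖₊ : ℝ≥0∞) < 1 by exact_mod_cast (show ‖z‖₊ < 1 by exact_mod_cast hz))
  have hdiff : DifferentiableAt ℂ q.sum z :=
    (hq.differentiableOn z hz').differentiableAt (EMetric.isOpen_ball.mem_nhds hz')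
  -- compute fderiv applied to z
  have h1 : HasSum (fun m => q.derivSeries m (fun _ => z)) (fderiv ℂ q.sum z) := by
    have := hq.fderiv.hasSum hz'
    simpa using this
  have h2 : HasSum (fun m => (q.derivSeries m fun _ => z) z) (fderiv ℂ q.sum z z) :=
    h1.mapL (ContinuousLinearMap.apply ℂ ℂ z)
  have h3 : ∀ m : ℕ, (q.derivSeries m fun _ => z) z = z * (p m fun _ => z) := by
    intro m
    rw [FormalMultilinearSeries.derivSeries_apply_diag]
    rw [hqdef, FormalMultilinearSeries.ofScalars_apply_eq]
    rw [FormalMultilinearSeries.apply_eq_pow_smul_coeff]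
    have hm1 : ((m:ℂ) + 1) ≠ 0 := Nat.cast_add_one_ne_zero m
    simp only [smul_eq_mul, nsmul_eq_mul, hc]
    push_cast
    field_simp
    ring
  rw [funext h3] at h2
  have h4 : HasSum (fun m => z * (p m fun _ => z)) (z * G z) := by
    have := (hp.hasSum hz').mul_left z
    simpa using this
  have hkey : fderiv ℂ q.sum z z = z * G z := h2.unique h4
  have hfd : fderiv ℂ q.sum z z = z * deriv q.sum z := by
    conv_lhs => rw [show z = z • (1:ℂ) by simp]
    rw [ContinuousLinearMap.map_smul]
    simp [fderiv_apply_one_eq_deriv]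
  have hderiv : deriv q.sum z = G z := by
    rcases eq_or_ne z 0 with rfl | hz0
    · have hd0 : deriv q.sum 0 = q 1 fun _ => 1 := hq.hasFPowerSeriesAt.deriv
      have hq1 : (q 1 fun _ => 1) = c 1 := by
        rw [hqdef, FormalMultilinearSeries.ofScalars_apply_eq]; simp
      have hG0 : G 0 = p.coeff 0 := by
        have := hp.hasFPowerSeriesAt.coeff_zero (fun _ => 1)
        rw [← this]; rfl
      rw [hd0, hq1, hG0]
      simp [hc]
    · exact mul_left_cancel₀ hz0 (hfd.symm.trans hkey)
  exact hderiv ▸ hdiff.hasDerivAt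

lemma aux_log {F : ℂ → ℂ} (hF : DifferentiableOn ℂ F (ball (0:ℂ) 1))
    (hne : ∀ z ∈ ball (0:ℂ) 1, F z ≠ 0) (hF0 : F 0 = 1) :
    ∃ L : ℂ → ℂ, DifferentiableOn ℂ L (ball (0:ℂ) 1) ∧ L 0 = 0 ∧
      ∀ z ∈ ball (0:ℂ) 1, exp (L z) = F z := by
  have h0mem : (0:ℂ) ∈ ball (0:ℂ) 1 := mem_ball_self one_pos
  have FA : AnalyticOnNhd ℂ F (ball (0:ℂ) 1) := hF.analyticOnNhd isOpen_ball
  set G : ℂ → ℂ := fun z => deriv F z / F z with hG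
  have GA : AnalyticOnNhd ℂ G (ball (0:ℂ) 1) := FA.deriv.div FA hne
  obtain ⟨p, hp⟩ := aux_series GA.differentiableOn
  obtain ⟨V, hV⟩ := aux_primitive hp
  set Φ : ℂ → ℂ := fun z => F z * exp (-V z) with hΦdef
  have hΦ : ∀ z ∈ ball (0:ℂ) 1, HasDerivAt Φ 0 z := by
    intro z hz
    have hFz : HasDerivAt F (deriv F z) z :=
      (hF.differentiableAt (isOpen_ball.mem_nhds hz)).hasDerivAt
    have hVz := hV z hz
    have hexp : HasDerivAt (fun w => exp (-V w)) (exp (-V z) * (-(G z))) z := hVz.neg.cexp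
    have := hFz.mul hexp
    refine this.congr_deriv ?_
    rw [hG]
    field_simp [hne z hz]
    ring
  have hconst : ∀ z ∈ ball (0:ℂ) 1, Φ z = Φ 0 := by
    intro z hz
    refine (convex_ball (0:ℂ) 1).is_const_of_fderivWithin_eq_zero
      (fun w hw => ((hΦ w hw).differentiableAt).differentiableWithinAt) ?_ hz h0mem
    intro w hw
    rw [fderivWithin_of_isOpen isOpen_ball hw]
    have h : HasFDerivAt Φ (0 : ℂ →L[ℂ] ℂ) w := by
      have := (hΦ w hw).hasFDerivAt
      refine this.congr_fderiv ?_
      ext1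
      simp
    exact h.fderiv
  refine ⟨fun z => V z - V 0, ?_, by simp, ?_⟩
  · intro z hz
    exact (((hV z hz).differentiableAt).sub_const _).differentiableWithinAt
  · intro z hz
    have h1 : Φ z = Φ 0 := hconst z hz
    have h2 : F z * exp (-V z) = exp (-V 0) := by
      simpa [hΦdef, hF0] using h1
    have : exp (V z - V 0) = exp (V z) * exp (-V 0) := by
      rw [← exp_add]; ring_nf
    rw [this, ← h2]
    have : exp (V z) * exp (-V z) = 1 := by rw [← exp_add]; simp
    calc exp (V z) * (F z * exp (-V z)) = F z * (exp (V z) * exp (-V z)) := by ring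
      _ = F z := by rw [this, mul_one]

/-- If `f` is holomorphic and injective on the unit disk with `f 0 = 0` and `f' 0 = 1`,
and `n ≥ 1`, then there is a holomorphic injective `g` on the disk with `g 0 = 0`,
`g' 0 = 1`, and `g z ^ n = f (z ^ n)` on the disk (the `n`-th root transform). -/
theorem nth_root_transform_univalent (f : ℂ → ℂ) (n : ℕ) (hn : 1 ≤ n)
    (hf : DifferentiableOn ℂ f (ball (0 : ℂ) 1))
    (hinj : Set.InjOn f (ball (0 : ℂ) 1))
    (hf0 : f 0 = 0) (hf'0 : deriv f 0 = 1) :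
    ∃ g : ℂ → ℂ, DifferentiableOn ℂ g (ball (0 : ℂ) 1) ∧
      Set.InjOn g (ball (0 : ℂ) 1) ∧ g 0 = 0 ∧ deriv g 0 = 1 ∧
      ∀ z ∈ ball (0 : ℂ) 1, g z ^ n = f (z ^ n) := by
  have hn0 : n ≠ 0 := Nat.one_le_iff_ne_zero.mp hn
  have hnC : (n : ℂ) ≠ 0 := Nat.cast_ne_zero.mpr hn0
  have h0mem : (0:ℂ) ∈ ball (0:ℂ) 1 := mem_ball_self one_pos
  set F : ℂ → ℂ := dslope f 0 with hFdef
  have hF0 : F 0 = 1 := by rw [hFdef, dslope_same]; exact hf'0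
  have hFd : DifferentiableOn ℂ F (ball (0:ℂ) 1) :=
    (differentiableOn_dslope (isOpen_ball.mem_nhds h0mem)).mpr hf
  have hid : ∀ z : ℂ, z * F z = f z := by
    intro z
    have := sub_smul_dslope f 0 z
    simpa [hf0, smul_eq_mul] using this
  have hFne : ∀ z ∈ ball (0:ℂ) 1, F z ≠ 0 := by
    intro z hz hFz
    rcases eq_or_ne z 0 with rfl | hz0
    · rw [hF0] at hFz; exact one_ne_zero hFz
    · have hfz : f z = 0 := by rw [← hid z, hFz, mul_zero]
      exact hz0 (hinj hz h0mem (by rw [hfz, hf0]))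
  obtain ⟨L, hLd, hL0, hLexp⟩ := aux_log hFd hFne hF0
  -- membership of z^n
  have hmem : ∀ z ∈ ball (0:ℂ) 1, z ^ n ∈ ball (0:ℂ) 1 := by
    intro z hz
    rw [mem_ball_zero_iff] at hz ⊢
    rw [norm_pow]
    exact pow_lt_one₀ (norm_nonneg z) hz hn0
  set H : ℂ → ℂ := fun z => exp (L (z ^ n) / n) with hHdef
  refine ⟨fun z => z * H z, ?_, ?_, by simp, ?_, ?_⟩
  · -- differentiability
    refine (differentiableOn_id).mul ?_
    refine DifferentiableOn.cexp ?_
    refine DifferentiableOn.div_const ?_ _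
    exact hLd.comp ((differentiable_id.pow n).differentiableOn) (fun z hz => hmem z hz)
  · -- injectivity
    have hpow : ∀ z ∈ ball (0:ℂ) 1, (z * H z) ^ n = f (z ^ n) := by
      intro z hz
      have : H z ^ n = F (z ^ n) := by
        rw [hHdef]
        rw [← Complex.exp_nat_mul]
        rw [mul_div_cancel₀ _ hnC]
        exact hLexp _ (hmem z hz)
      rw [mul_pow, this, hid (z ^ n)]
    intro z1 h1 z2 h2 heq
    simp only at heq
    have hfeq : f (z1 ^ n) = f (z2 ^ n) := by
      rw [← hpow z1 h1, ← hpow z2 h2, heq]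
    have hzn : z1 ^ n = z2 ^ n := hinj (hmem z1 h1) (hmem z2 h2) hfeq
    have hHeq : H z1 = H z2 := by rw [hHdef]; simp only; rw [hzn]
    have hHne : H z1 ≠ 0 := Complex.exp_ne_zero _
    have : z1 * H z1 = z2 * H z1 := by rw [heq, hHeq]
    exact mul_right_cancel₀ hHne this
  · -- derivative at 0
    have hL0n : (0:ℂ) ^ n = 0 := zero_pow hn0
    have hLdiff : DifferentiableAt ℂ L 0 :=
      (hLd 0 h0mem).differentiableAt (isOpen_ball.mem_nhds h0mem)
    have hpowd : HasDerivAt (fun z : ℂ => z ^ n) ((n : ℂ) * 0 ^ (n - 1)) 0 := hasDerivAt_pow n 0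
    have hcomp : HasDerivAt (fun z : ℂ => L (z ^ n)) (deriv L 0 * ((n:ℂ) * 0 ^ (n-1))) 0 := by
      have hL' : HasDerivAt L (deriv L 0) ((0:ℂ) ^ n) := by
        rw [hL0n]; exact hLdiff.hasDerivAt
      exact hL'.comp 0 hpowd
    have hHd : HasDerivAt H (deriv L 0 * ((n:ℂ) * 0 ^ (n-1)) / n * H 0) 0 := by
      have := (hcomp.div_const (n:ℂ)).cexp
      refine this.congr_deriv ?_
      ring
    have hH0 : H 0 = 1 := by
      rw [hHdef]; simp only; rw [hL0n, hL0]; simp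
    have hgd : HasDerivAt (fun z => z * H z) (1 * H 0 + 0 * (deriv L 0 * ((n:ℂ) * 0 ^ (n-1)) / n * H 0)) 0 :=
      (hasDerivAt_id 0).mul hHd
    have : HasDerivAt (fun z => z * H z) 1 0 := by
      convert hgd using 1
      rw [hH0]; ring
    exact this.deriv
  · -- the power identity
    intro z hz
    have : H z ^ n = F (z ^ n) := by
      rw [hHdef, ← Complex.exp_nat_mul, mul_div_cancel₀ _ hnC]
      exact hLexp _ (hmem z hz)
    rw [mul_pow, this, hid (z ^ n)]
end

section
/- For each integer m ≥ 1, the map φ₊(z) = 2^{2/m} z (1 + z^m)^{-2/m} (defined via the principal branch, normalized so φ₊'(0) = 2^{2/m} > 0) is injective on the open unit disk and maps it onto the complement in ℂ of the union of the m rays {r·e^{2πij/m} : r ≥ 1}, j = 0, …, m−1. -/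
open Complex Metric Real

/-- A point lies on one of the `m` radial slits iff its `m`-th power is a real
number `≥ 1`. -/
private lemma slit_iff_pow (m : ℕ) (hm : 1 ≤ m) (w : ℂ) :
    (∃ j : ℕ, j < m ∧ ∃ r : ℝ, 1 ≤ r ∧
        w = (r : ℂ) * Complex.exp (2 * Real.pi * Complex.I * j / m)) ↔
      (∃ s : ℝ, 1 ≤ s ∧ w ^ m = (s : ℂ)) := by
  have hm0 : (m : ℂ) ≠ 0 := Nat.cast_ne_zero.mpr (by omega)
  constructor
  · rintro ⟨j, hj, r, hr, rfl⟩
    refine ⟨r ^ m, one_le_pow₀ hr, ?_⟩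
    rw [mul_pow, ← Complex.exp_nat_mul]
    have h1 : (m : ℂ) * (2 * Real.pi * Complex.I * j / m) = (j : ℂ) * (2 * Real.pi * Complex.I) := by
      field_simp
    rw [h1, Complex.exp_nat_mul_two_pi_mul_I]
    push_cast; ring
  · rintro ⟨s, hs, hws⟩
    have hw : w ≠ 0 := by
      intro h
      rw [h, zero_pow (by omega)] at hws
      have : (1 : ℝ) ≤ 0 := by
        have := hws.symm
        rw [Complex.ofReal_eq_zero] at this
        linarith [this ▸ hs]
      linarith
    set r : ℝ := ‖w‖ with hr
    have hrpow : r ^ m = s := by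
      have := congrArg norm hws
      rwa [norm_pow, Complex.norm_real, Real.norm_eq_abs, _root_.abs_of_nonneg (by linarith)] at this
    have hr1 : 1 ≤ r := by
      by_contra h
      push_neg at h
      have : r ^ m < 1 := pow_lt_one₀ (norm_nonneg w) h (by omega)
      linarith [hrpow ▸ this]
    have hr0 : (r : ℂ) ≠ 0 := by
      simp only [ne_eq, Complex.ofReal_eq_zero]; intro h; rw [h] at hr1; linarith
    set ζ : ℂ := w / r with hζ
    have hζm : ζ ^ m = 1 := by
      rw [hζ, div_pow, hws, ← hrpow]
      push_cast
      rw [div_self (pow_ne_zero _ hr0)]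
    haveI : NeZero m := ⟨by omega⟩
    obtain ⟨i, hi, hieq⟩ :=
      (Complex.isPrimitiveRoot_exp m (by omega)).eq_pow_of_pow_eq_one hζm
    refine ⟨i, hi, r, hr1, ?_⟩
    have : w = (r : ℂ) * ζ := by
      rw [hζ, mul_div_cancel₀ _ hr0]
    rw [this, ← hieq, ← Complex.exp_nat_mul]
    congr 2
    field_simp

/-- The Koebe-type map `u ↦ 4u/(1+u)²` is injective on the disk
(cross-multiplied form). -/
private lemma K_inj {u v : ℂ} (hu : ‖u‖ < 1) (hv : ‖v‖ < 1)
    (h : 4 * u * (1 + v) ^ 2 = 4 * v * (1 + u) ^ 2) : u = v := by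
  have key : (u - v) * (1 - u * v) = 0 := by linear_combination h / 4
  rcases mul_eq_zero.mp key with h1 | h1
  · exact sub_eq_zero.mp h1
  · exfalso
    have : u * v = 1 := by linear_combination -h1
    have habs : ‖u * v‖ = 1 := by rw [this, norm_one]
    rw [norm_mul] at habs
    nlinarith [norm_nonneg u, norm_nonneg v]

/-- The Koebe-type map does not take values in `[1, ∞)` on the disk. -/
private lemma K_avoids {u : ℂ} (hu : ‖u‖ < 1) {s : ℝ} (hs : 1 ≤ s)
    (h : 4 * u = (s : ℂ) * (1 + u) ^ 2) : False := by
  have hc : 4 * (starRingEnd ℂ) u = (s : ℂ) * (1 + (starRingEnd ℂ) u) ^ 2 := by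
    have := congrArg (starRingEnd ℂ) h
    simpa [map_mul, map_add, map_pow, map_ofNat, Complex.conj_ofReal] using this
  by_cases hre : (starRingEnd ℂ) u = u
  · -- u is real
    obtain ⟨x, hx⟩ := Complex.conj_eq_iff_real.mp hre
    rw [hx] at h hu
    rw [Complex.norm_real, Real.norm_eq_abs] at hu
    have hx1 : x < 1 := lt_of_abs_lt hu
    have hre : 4 * x = s * (1 + x) ^ 2 := by
      exact_mod_cast h
    nlinarith [sq_nonneg (1 - x), sq_nonneg (1 + x)]
  · -- u not real : Vieta forces |u| = 1
    have key : (s : ℂ) * ((starRingEnd ℂ) u - u) * (u * (starRingEnd ℂ) u - 1) = 0 := by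
      linear_combination (starRingEnd ℂ) u * h - u * hc
    have hs0 : (s : ℂ) ≠ 0 := by
      simp only [ne_eq, Complex.ofReal_eq_zero]; intro h0; rw [h0] at hs; linarith
    have hne : (starRingEnd ℂ) u - u ≠ 0 := sub_ne_zero.mpr hre
    have h1 : u * (starRingEnd ℂ) u - 1 = 0 := by
      rcases mul_eq_zero.mp key with h' | h'
      · exact absurd (mul_eq_zero.mp h') (by push_neg; exact ⟨hs0, hne⟩)
      · exact h'
    have h2 : (Complex.normSq u : ℂ) = 1 := by
      rw [← Complex.mul_conj]; linear_combination h1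
    have h3 : Complex.normSq u = 1 := by exact_mod_cast h2
    have h4 : ‖u‖ ^ 2 = 1 := by rw [Complex.sq_norm, h3]
    nlinarith [norm_nonneg u]

/-- The `m`-th power of the slit map, in cross-multiplied form. -/
private lemma phi_pow (m : ℕ) (hm : 1 ≤ m) (z : ℂ) (hz : 1 + z ^ m ≠ 0) :
    ((2 : ℂ) ^ ((2 : ℂ) / m) * z * (1 + z ^ m) ^ (-((2 : ℂ) / m))) ^ m * (1 + z ^ m) ^ 2 =
      4 * z ^ m := by
  have hm0 : (m : ℂ) ≠ 0 := Nat.cast_ne_zero.mpr (by omega)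
  rw [mul_pow, mul_pow]
  have h1 : ((2 : ℂ) ^ ((2 : ℂ) / m)) ^ m = 4 := by
    rw [← Complex.cpow_nat_mul]
    rw [show (m : ℂ) * ((2 : ℂ) / m) = ((2 : ℕ) : ℂ) by push_cast; field_simp]
    rw [Complex.cpow_natCast]; norm_num
  have h2 : ((1 + z ^ m) ^ (-((2 : ℂ) / m))) ^ m = ((1 + z ^ m) ^ 2)⁻¹ := by
    rw [← Complex.cpow_nat_mul]
    rw [show (m : ℂ) * (-((2 : ℂ) / m)) = ((-2 : ℤ) : ℂ) by push_cast; field_simp]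
    rw [Complex.cpow_intCast, zpow_neg, zpow_two, sq]
  rw [h1, h2, mul_assoc, inv_mul_cancel₀ (pow_ne_zero 2 hz), mul_one]

private lemma one_add_pow_ne (m : ℕ) (hm : 1 ≤ m) {z : ℂ} (hz : ‖z‖ < 1) :
    1 + z ^ m ≠ 0 := by
  intro h
  have h1 : z ^ m = -1 := by linear_combination h
  have h2 := congrArg norm h1
  rw [norm_pow] at h2
  simp only [norm_neg, norm_one] at h2
  have h3 : ‖z‖ ^ m < 1 := pow_lt_one₀ (norm_nonneg z) hz (by omega)
  linarith

private lemma abs_eq_one_of_pow_eq_one {m : ℕ} (hm : 1 ≤ m) {x : ℝ} (hx : 0 ≤ x)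
    (h : x ^ m = 1) : x = 1 := by
  rcases lt_trichotomy x 1 with h1 | h1 | h1
  · have : x ^ m < 1 := pow_lt_one₀ hx h1 (by omega)
    linarith
  · exact h1
  · have : 1 < x ^ m := one_lt_pow₀ h1 (by omega)
    linarith

/-- For `m ≥ 1`, the map `φ₊(z) = 2^(2/m) z (1+z^m)^(-2/m)` (principal branch,
equal to `2^(2/m) z` to first order at `0`) is injective on the unit disk and maps it
onto the complement of the union of the `m` radial slits `{r e^(2πij/m) : r ≥ 1}`. -/
theorem m_slit_map_bijects (m : ℕ) (hm : 1 ≤ m) :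
    Set.InjOn
      (fun z : ℂ => (2 : ℂ) ^ ((2 : ℂ) / m) * z * (1 + z ^ m) ^ (-((2 : ℂ) / m)))
      (ball (0 : ℂ) 1) ∧
    (fun z : ℂ => (2 : ℂ) ^ ((2 : ℂ) / m) * z * (1 + z ^ m) ^ (-((2 : ℂ) / m))) ''
        (ball (0 : ℂ) 1) =
      {w : ℂ | ¬ ∃ j : ℕ, j < m ∧ ∃ r : ℝ, 1 ≤ r ∧
        w = (r : ℂ) * Complex.exp (2 * Real.pi * Complex.I * j / m)} := by
  have hm0 : m ≠ 0 := by omega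
  have habspow : ∀ z : ℂ, ‖z‖ < 1 → ‖z ^ m‖ < 1 := by
    intro z hz
    rw [norm_pow]
    exact pow_lt_one₀ (norm_nonneg z) hz hm0
  constructor
  · -- Injectivity
    intro z₁ h₁ z₂ h₂ heq
    rw [mem_ball, dist_zero_right] at h₁ h₂
    dsimp only at heq
    have hden₁ : 1 + z₁ ^ m ≠ 0 := one_add_pow_ne m hm h₁
    have hden₂ : 1 + z₂ ^ m ≠ 0 := one_add_pow_ne m hm h₂
    have hp₁ := phi_pow m hm z₁ hden₁
    have hp₂ := phi_pow m hm z₂ hden₂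
    have hpow : ((2 : ℂ) ^ ((2 : ℂ) / m) * z₁ * (1 + z₁ ^ m) ^ (-((2 : ℂ) / m))) ^ m =
        ((2 : ℂ) ^ ((2 : ℂ) / m) * z₂ * (1 + z₂ ^ m) ^ (-((2 : ℂ) / m))) ^ m := by
      rw [heq]
    have hK : 4 * z₁ ^ m * (1 + z₂ ^ m) ^ 2 = 4 * z₂ ^ m * (1 + z₁ ^ m) ^ 2 := by
      linear_combination (-(1 + z₂ ^ m) ^ 2) * hp₁ + (1 + z₁ ^ m) ^ 2 * hp₂ +
        (1 + z₁ ^ m) ^ 2 * (1 + z₂ ^ m) ^ 2 * hpow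
    have hzm : z₁ ^ m = z₂ ^ m := K_inj (habspow z₁ h₁) (habspow z₂ h₂) hK
    have hC : (1 + z₁ ^ m) ^ (-((2 : ℂ) / m)) ≠ 0 := by
      intro h
      exact hden₁ ((Complex.cpow_eq_zero_iff _ _).mp h).1
    have hA : (2 : ℂ) ^ ((2 : ℂ) / m) ≠ 0 := by
      intro h
      have := ((Complex.cpow_eq_zero_iff _ _).mp h).1
      norm_num at this
    rw [← hzm] at heq
    exact mul_left_cancel₀ hA (mul_right_cancel₀ hC heq)
  · -- Surjectivity
    ext w
    simp only [Set.mem_image, mem_ball, dist_zero_right,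
      Set.mem_setOf_eq]
    constructor
    · rintro ⟨z, hz, rfl⟩
      intro hslit
      obtain ⟨s, hs, hpow⟩ := (slit_iff_pow m hm _).mp hslit
      have hden : 1 + z ^ m ≠ 0 := one_add_pow_ne m hm hz
      have hp := phi_pow m hm z hden
      have hKv : 4 * z ^ m = (s : ℂ) * (1 + z ^ m) ^ 2 := by
        linear_combination -hp + (1 + z ^ m) ^ 2 * hpow
      exact K_avoids (habspow z hz) hs hKv
    · intro hw
      have hns : ¬ ∃ s : ℝ, 1 ≤ s ∧ w ^ m = (s : ℂ) :=
        fun h => hw ((slit_iff_pow m hm w).mpr h)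
      by_cases hw0 : w = 0
      · exact ⟨0, by norm_num, by simp [hw0, zero_pow hm0]⟩
      · set v : ℂ := w ^ m with hv
        have hv0 : v ≠ 0 := pow_ne_zero m hw0
        have hvs : ∀ s : ℝ, 1 ≤ s → v ≠ (s : ℂ) := fun s hs h => hns ⟨s, hs, h⟩
        obtain ⟨e0, he0⟩ := IsAlgClosed.exists_pow_nat_eq (1 - v) (two_pos)
        have hre0 : e0.re ≠ 0 := by
          intro h
          apply hns
          have he0' : e0 ^ 2 = ((-(e0.im ^ 2) : ℝ) : ℂ) := by
            apply Complex.ext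
            · simp [pow_two, Complex.mul_re, h]
            · simp [pow_two, Complex.mul_im, h]
          refine ⟨1 + e0.im ^ 2, by nlinarith [sq_nonneg e0.im], ?_⟩
          have hv1 : v = 1 - e0 ^ 2 := by linear_combination he0
          show v = _
          rw [hv1, he0']
          push_cast
          ring
        obtain ⟨e, he, her⟩ : ∃ e : ℂ, e ^ 2 = 1 - v ∧ 0 < e.re := by
          rcases lt_trichotomy e0.re 0 with h | h | h
          · exact ⟨-e0, by rw [neg_sq]; exact he0, by simpa using neg_pos.mpr h⟩
          · exact absurd h hre0
          · exact ⟨e0, he0, h⟩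
        have h1e : (1 : ℂ) + e ≠ 0 := by
          intro h
          have : ((1 : ℂ) + e).re = 0 := by rw [h]; simp
          rw [Complex.add_re, Complex.one_re] at this
          linarith
        set u : ℂ := (1 - e) / (1 + e) with hu
        have habsu : ‖u‖ < 1 := by
          rw [hu, norm_div, div_lt_one (norm_pos_iff.mpr h1e)]
          have h2 : ‖1 - e‖ ^ 2 < ‖1 + e‖ ^ 2 := by
            rw [Complex.sq_norm, Complex.sq_norm, Complex.normSq_apply, Complex.normSq_apply]
            simp only [Complex.sub_re, Complex.sub_im, Complex.add_re, Complex.add_im,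
              Complex.one_re, Complex.one_im]
            nlinarith [her]
          exact lt_of_pow_lt_pow_left₀ 2 (norm_nonneg _) h2
        have hKu : 4 * u = v * (1 + u) ^ 2 := by
          rw [hu]
          have h1 : 1 + (1 - e) / (1 + e) = 2 / (1 + e) := by field_simp; ring
          rw [h1, div_pow]
          have h2 : v * ((2 : ℂ) ^ 2 / (1 + e) ^ 2) = v * 2 ^ 2 / (1 + e) ^ 2 := by ring
          have h3 : 4 * ((1 - e) / (1 + e)) = 4 * (1 - e) / (1 + e) := by ring
          rw [h2, h3, div_eq_div_iff h1e (pow_ne_zero 2 h1e)]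
          linear_combination (-(4 : ℂ) * (1 + e)) * he
        obtain ⟨z₀, hz₀⟩ := IsAlgClosed.exists_pow_nat_eq u (Nat.pos_of_ne_zero hm0)
        have habsz₀ : ‖z₀‖ < 1 := by
          by_contra h
          push_neg at h
          have h1 : (1 : ℝ) ≤ ‖z₀‖ ^ m := one_le_pow₀ h
          rw [← norm_pow, hz₀] at h1
          linarith
        have hden : 1 + z₀ ^ m ≠ 0 := one_add_pow_ne m hm habsz₀
        have h1u : 1 + u ≠ 0 := by rw [← hz₀]; exact hden
        have hp := phi_pow m hm z₀ hden
        have hFm : ((2 : ℂ) ^ ((2 : ℂ) / m) * z₀ * (1 + z₀ ^ m) ^ (-((2 : ℂ) / m))) ^ m = v := by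
          apply mul_right_cancel₀ (pow_ne_zero 2 h1u)
          rw [← hz₀] at hKu ⊢
          rw [hp, hKu]
        have hF0 : (2 : ℂ) ^ ((2 : ℂ) / m) * z₀ * (1 + z₀ ^ m) ^ (-((2 : ℂ) / m)) ≠ 0 := by
          intro h
          rw [h, zero_pow hm0] at hFm
          exact hv0 hFm.symm
        set ζ : ℂ := ((2 : ℂ) ^ ((2 : ℂ) / m) * z₀ * (1 + z₀ ^ m) ^ (-((2 : ℂ) / m))) / w
          with hζ
        have hζm : ζ ^ m = 1 := by
          rw [hζ, div_pow, hFm, hv]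
          exact div_self hv0
        have hζ0 : ζ ≠ 0 := by
          intro h
          rw [h, zero_pow hm0] at hζm
          exact zero_ne_one hζm
        have habsζ : ‖ζ‖ = 1 := by
          have h1 := congrArg norm hζm
          rw [norm_pow, norm_one] at h1
          exact abs_eq_one_of_pow_eq_one hm (norm_nonneg ζ) h1
        refine ⟨z₀ / ζ, ?_, ?_⟩
        · rw [norm_div, habsζ, div_one]
          exact habsz₀
        · have hzm : (z₀ / ζ) ^ m = z₀ ^ m := by
            rw [div_pow, hζm, div_one]
          show (2 : ℂ) ^ ((2 : ℂ) / m) * (z₀ / ζ) * (1 + (z₀ / ζ) ^ m) ^ (-((2 : ℂ) / m)) = w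
          rw [hzm]
          have hζw : (2 : ℂ) ^ ((2 : ℂ) / m) * z₀ * (1 + z₀ ^ m) ^ (-((2 : ℂ) / m)) = ζ * w := by
            rw [hζ, div_mul_cancel₀ _ hw0]
          calc (2 : ℂ) ^ ((2 : ℂ) / m) * (z₀ / ζ) * (1 + z₀ ^ m) ^ (-((2 : ℂ) / m))
              = ((2 : ℂ) ^ ((2 : ℂ) / m) * z₀ * (1 + z₀ ^ m) ^ (-((2 : ℂ) / m))) / ζ := by
                ring
            _ = (ζ * w) / ζ := by rw [hζw]
            _ = w := mul_div_cancel_left₀ w hζ0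
end

section
/- In the two-slit case m = 2 with z_1 = e^{it}, z_2 = e^{-it} symmetric about the real axis and angle parameters (γ, 2 − γ), the quantity a_1 = |1 − c_1/z_1| · |1 − c_2/z_1| equals 2γ when c_1, c_2 are the two critical points; i.e., a_1(γ_1, γ_2) = 2γ_1. -/
open Complex

lemma root_struct (γ s : ℝ) (hγ0 : 0 < γ) (hγ2 : γ < 2) (hs : s^2 ≤ 1) (c : ℂ)
    (hQ : c^2 + 2*Complex.I*((γ:ℂ)-1)*(s:ℂ)*c - 1 = 0) :
    c.re ≠ 0 ∧ c.im = (1-γ)*s ∧ c.re^2 = 1 - ((1-γ)*s)^2 := by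
  have hre : (c^2 + 2*Complex.I*((γ:ℂ)-1)*(s:ℂ)*c - 1).re = 0 := by rw [hQ]; rfl
  have him : (c^2 + 2*Complex.I*((γ:ℂ)-1)*(s:ℂ)*c - 1).im = 0 := by rw [hQ]; rfl
  rw [show c^2 = c*c by ring] at hre him
  simp [Complex.mul_re, Complex.mul_im, Complex.I_re, Complex.I_im] at hre him
  have hx0 : c.re ≠ 0 := by
    intro h
    rw [h] at hre
    simp at hre
    nlinarith [sq_nonneg (c.im + (γ-1)*s), sq_nonneg (γ-1), sq_nonneg s,
      mul_pos hγ0 (by linarith : (0:ℝ) < 2 - γ)]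
  have hy2 : c.im = (1-γ)*s := by
    have h2 : c.re * (c.im + (γ-1)*s) = 0 := by linear_combination him/2
    rcases mul_eq_zero.mp h2 with h | h
    · exact absurd h hx0
    · linarith
  refine ⟨hx0, hy2, ?_⟩
  linear_combination hre + (c.im - (1-γ)*s) * hy2

lemma key_u_eq_zero (γ A₁ B₁ A₂ B₂ u : ℝ) (hγ0 : 0 < γ) (hγ2 : γ < 2)
    (hA₁ : 0 < A₁) (hB₁ : 0 < B₁) (hA₂ : 0 < A₂) (hB₂ : 0 < B₂)
    (h1 : A₂^2 = A₁^2 + 4*u) (h2 : B₂^2 = B₁^2 + 4*u)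
    (hF : A₁^γ * B₁^(2-γ) = A₂^γ * B₂^(2-γ)) : u = 0 := by
  have h2γ : (0:ℝ) < 2 - γ := by linarith
  rcases lt_trichotomy u 0 with hu | hu | hu
  · have hA : A₂ < A₁ := lt_of_pow_lt_pow_left₀ 2 hA₁.le (by nlinarith)
    have hB : B₂ < B₁ := lt_of_pow_lt_pow_left₀ 2 hB₁.le (by nlinarith)
    have := mul_lt_mul'' (Real.rpow_lt_rpow hA₂.le hA hγ0)
      (Real.rpow_lt_rpow hB₂.le hB h2γ)
      (Real.rpow_pos_of_pos hA₂ γ).le (Real.rpow_pos_of_pos hB₂ (2-γ)).le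
    linarith
  · exact hu
  · have hA : A₁ < A₂ := lt_of_pow_lt_pow_left₀ 2 hA₂.le (by nlinarith)
    have hB : B₁ < B₂ := lt_of_pow_lt_pow_left₀ 2 hB₂.le (by nlinarith)
    have := mul_lt_mul'' (Real.rpow_lt_rpow hA₁.le hA hγ0)
      (Real.rpow_lt_rpow hB₁.le hB h2γ)
      (Real.rpow_pos_of_pos hA₁ γ).le (Real.rpow_pos_of_pos hB₁ (2-γ)).le
    linarith

set_option maxHeartbeats 1000000 in
/-- Two-slit case of Theorem 2(b): with accessory parameters `z₁ = e^(it)`, `z₂ = e^(-it)`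
symmetric about the real axis, angle parameters `(γ, 2-γ)`, and `c₁ ≠ c₂` the critical
points (roots of `γz/(z-z₁) + (2-γ)z/(z-z₂) = 1`) whose images under
`φ₊(z) = ρ₀ z (1 - z/z₁)^(-γ) (1 - z/z₂)^(-(2-γ))` lie on the unit circle (the slit tips),
we have `a₁ = |1 - c₁/z₁| · |1 - c₂/z₁| = 2γ`. -/
theorem two_slit_a1_eq (t γ : ℝ) (hγ : γ ∈ Set.Ioo (0 : ℝ) 2)
    (z₁ z₂ c₁ c₂ : ℂ) (ρ₀ : ℝ) (hρ : 0 < ρ₀)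
    (hz₁ : z₁ = Complex.exp (t * Complex.I))
    (hz₂ : z₂ = Complex.exp (-t * Complex.I))
    (hne : c₁ ≠ c₂)
    (hc₁ : c₁ ≠ z₁ ∧ c₁ ≠ z₂ ∧
      (γ : ℂ) * c₁ / (c₁ - z₁) + (2 - (γ : ℂ)) * c₁ / (c₁ - z₂) = 1)
    (hc₂ : c₂ ≠ z₁ ∧ c₂ ≠ z₂ ∧
      (γ : ℂ) * c₂ / (c₂ - z₁) + (2 - (γ : ℂ)) * c₂ / (c₂ - z₂) = 1)
    (htip₁ : ‖
      ((ρ₀ : ℂ) * c₁ * (1 - c₁ / z₁) ^ (-(γ : ℂ)) * (1 - c₁ / z₂) ^ (-(2 - (γ : ℂ))))‖ = 1)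
    (htip₂ : ‖
      ((ρ₀ : ℂ) * c₂ * (1 - c₂ / z₁) ^ (-(γ : ℂ)) * (1 - c₂ / z₂) ^ (-(2 - (γ : ℂ))))‖ = 1) :
    ‖1 - c₁ / z₁‖ * ‖1 - c₂ / z₁‖ = 2 * γ := by
  obtain ⟨hγ0, hγ2⟩ := hγ
  set s := Real.sin t with hsdef
  set co := Real.cos t with hcodef
  have hpyth : co^2 + s^2 = 1 := by
    rw [hsdef, hcodef]; exact Real.cos_sq_add_sin_sq t
  have hz₁' : z₁ = (co:ℂ) + (s:ℂ) * Complex.I := by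
    rw [hz₁, Complex.exp_mul_I, ← Complex.ofReal_cos, ← Complex.ofReal_sin]
  have hz₂' : z₂ = (co:ℂ) - (s:ℂ) * Complex.I := by
    rw [hz₂, show (-(t:ℂ)) * Complex.I = (-(t:ℂ)) * Complex.I from rfl,
      Complex.exp_mul_I, Complex.cos_neg, Complex.sin_neg,
      ← Complex.ofReal_cos, ← Complex.ofReal_sin]
    ring
  have hpc : (co:ℂ)^2 + (s:ℂ)^2 = 1 := by exact_mod_cast congrArg (Complex.ofReal) hpyth
  have hz1z2 : z₁ * z₂ = 1 := by
    rw [hz₁', hz₂']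
    linear_combination hpc - (s:ℂ)^2 * Complex.I_sq
  have hzdiff : z₁ - z₂ = 2*(s:ℂ)*Complex.I := by rw [hz₁', hz₂']; ring
  have d₁₁ : c₁ - z₁ ≠ 0 := sub_ne_zero.mpr hc₁.1
  have d₁₂ : c₁ - z₂ ≠ 0 := sub_ne_zero.mpr hc₁.2.1
  have d₂₁ : c₂ - z₁ ≠ 0 := sub_ne_zero.mpr hc₂.1
  have d₂₂ : c₂ - z₂ ≠ 0 := sub_ne_zero.mpr hc₂.2.1
  have h0₁ : (γ:ℂ)*c₁*(c₁-z₂) + (2-(γ:ℂ))*c₁*(c₁-z₁) = (c₁-z₁)*(c₁-z₂) := by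
    have h := hc₁.2.2
    field_simp at h
    linear_combination h
  have h0₂ : (γ:ℂ)*c₂*(c₂-z₂) + (2-(γ:ℂ))*c₂*(c₂-z₁) = (c₂-z₁)*(c₂-z₂) := by
    have h := hc₂.2.2
    field_simp at h
    linear_combination h
  have hQ₁ : c₁^2 + 2*Complex.I*((γ:ℂ)-1)*(s:ℂ)*c₁ - 1 = 0 := by
    linear_combination h0₁ - ((γ:ℂ)-1)*c₁*hzdiff + hz1z2
  have hQ₂ : c₂^2 + 2*Complex.I*((γ:ℂ)-1)*(s:ℂ)*c₂ - 1 = 0 := by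
    linear_combination h0₂ - ((γ:ℂ)-1)*c₂*hzdiff + hz1z2
  have hs1 : s^2 ≤ 1 := by nlinarith [sq_nonneg co]
  obtain ⟨hx₁ne, hy₁, hx₁sq⟩ := root_struct γ s hγ0 hγ2 hs1 c₁ hQ₁
  obtain ⟨hx₂ne, hy₂, hx₂sq⟩ := root_struct γ s hγ0 hγ2 hs1 c₂ hQ₂
  have hxx : c₂.re = -c₁.re := by
    have hfac : (c₂.re - c₁.re)*(c₂.re + c₁.re) = 0 := by
      linear_combination hx₂sq - hx₁sq
    rcases mul_eq_zero.mp hfac with h | h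
    · exfalso; apply hne; apply Complex.ext
      · linarith [sub_eq_zero.mp h]
      · rw [hy₁, hy₂]
    · linarith
  have hz₁ne : z₁ ≠ 0 := by rw [hz₁]; exact Complex.exp_ne_zero _
  have hz₂ne : z₂ ≠ 0 := by rw [hz₂]; exact Complex.exp_ne_zero _
  have habsz₁ : ‖z₁‖ = 1 := by rw [hz₁]; simp [Complex.norm_exp]
  have habsz₂ : ‖z₂‖ = 1 := by rw [hz₂]; simp [Complex.norm_exp]
  set A₁ := ‖1 - c₁/z₁‖ with hA₁def
  set B₁ := ‖1 - c₁/z₂‖ with hB₁def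
  set A₂ := ‖1 - c₂/z₁‖ with hA₂def
  set B₂ := ‖1 - c₂/z₂‖ with hB₂def
  have hA1sq : A₁^2 = (co - c₁.re)^2 + (s - c₁.im)^2 := by
    rw [hA₁def, show (1 : ℂ) - c₁/z₁ = (z₁ - c₁)/z₁ by field_simp, norm_div,
      habsz₁, div_one, Complex.sq_norm, Complex.normSq_apply, hz₁']
    simp
    ring
  have hB1sq : B₁^2 = (co - c₁.re)^2 + (s + c₁.im)^2 := by
    rw [hB₁def, show (1 : ℂ) - c₁/z₂ = (z₂ - c₁)/z₂ by field_simp, norm_div,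
      habsz₂, div_one, Complex.sq_norm, Complex.normSq_apply, hz₂']
    simp
    ring
  have hA2sq : A₂^2 = (co - c₂.re)^2 + (s - c₂.im)^2 := by
    rw [hA₂def, show (1 : ℂ) - c₂/z₁ = (z₁ - c₂)/z₁ by field_simp, norm_div,
      habsz₁, div_one, Complex.sq_norm, Complex.normSq_apply, hz₁']
    simp
    ring
  have hB2sq : B₂^2 = (co - c₂.re)^2 + (s + c₂.im)^2 := by
    rw [hB₂def, show (1 : ℂ) - c₂/z₂ = (z₂ - c₂)/z₂ by field_simp, norm_div,
      habsz₂, div_one, Complex.sq_norm, Complex.normSq_apply, hz₂']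
    simp
    ring
  have hone₁ : (1 : ℂ) - c₁/z₁ ≠ 0 := by
    intro h
    exact hc₁.1 ((div_eq_one_iff_eq hz₁ne).mp (sub_eq_zero.mp h).symm)
  have hone₂ : (1 : ℂ) - c₁/z₂ ≠ 0 := by
    intro h
    exact hc₁.2.1 ((div_eq_one_iff_eq hz₂ne).mp (sub_eq_zero.mp h).symm)
  have hone₃ : (1 : ℂ) - c₂/z₁ ≠ 0 := by
    intro h
    exact hc₂.1 ((div_eq_one_iff_eq hz₁ne).mp (sub_eq_zero.mp h).symm)
  have hone₄ : (1 : ℂ) - c₂/z₂ ≠ 0 := by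
    intro h
    exact hc₂.2.1 ((div_eq_one_iff_eq hz₂ne).mp (sub_eq_zero.mp h).symm)
  have hA₁pos : 0 < A₁ := norm_pos_iff.mpr hone₁
  have hB₁pos : 0 < B₁ := norm_pos_iff.mpr hone₂
  have hA₂pos : 0 < A₂ := norm_pos_iff.mpr hone₃
  have hB₂pos : 0 < B₂ := norm_pos_iff.mpr hone₄
  have hac₁ : ‖c₁‖ = 1 := by
    have h : ‖c₁‖ ^ 2 = 1 ^ 2 := by
      rw [Complex.sq_norm, Complex.normSq_apply, one_pow]
      linear_combination hx₁sq + (c₁.im + (1-γ)*s)*hy₁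
    exact (sq_eq_sq₀ (norm_nonneg _) zero_le_one).mp h
  have hac₂ : ‖c₂‖ = 1 := by
    have h : ‖c₂‖ ^ 2 = 1 ^ 2 := by
      rw [Complex.sq_norm, Complex.normSq_apply, one_pow]
      linear_combination hx₂sq + (c₂.im + (1-γ)*s)*hy₂
    exact (sq_eq_sq₀ (norm_nonneg _) zero_le_one).mp h
  have e₁ : (-(γ:ℂ)) = ((-γ : ℝ) : ℂ) := by push_cast; ring
  have e₂ : (-(2 - (γ:ℂ))) = ((-(2-γ) : ℝ) : ℂ) := by push_cast; ring
  rw [e₁, e₂, norm_mul, norm_mul, norm_mul, Complex.norm_cpow_real, Complex.norm_cpow_real,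
    Complex.norm_real, Real.norm_eq_abs, abs_of_pos hρ, hac₁] at htip₁
  rw [e₁, e₂, norm_mul, norm_mul, norm_mul, Complex.norm_cpow_real, Complex.norm_cpow_real,
    Complex.norm_real, Real.norm_eq_abs, abs_of_pos hρ, hac₂] at htip₂
  -- htip₁ : ρ₀ * 1 * A₁ ^ (-γ) * B₁ ^ (-(2-γ)) = 1
  have hE : A₁ ^ (-γ) * B₁ ^ (-(2-γ)) = A₂ ^ (-γ) * B₂ ^ (-(2-γ)) := by
    have h1 : ρ₀ * (A₁ ^ (-γ) * B₁ ^ (-(2-γ))) = ρ₀ * (A₂ ^ (-γ) * B₂ ^ (-(2-γ))) := by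
      rw [show ρ₀ * (A₁ ^ (-γ) * B₁ ^ (-(2-γ))) = ρ₀ * 1 * A₁ ^ (-γ) * B₁ ^ (-(2-γ)) by ring,
        show ρ₀ * (A₂ ^ (-γ) * B₂ ^ (-(2-γ))) = ρ₀ * 1 * A₂ ^ (-γ) * B₂ ^ (-(2-γ)) by ring,
        htip₁, htip₂]
    exact mul_left_cancel₀ (ne_of_gt hρ) h1
  have hF : A₁ ^ γ * B₁ ^ (2-γ) = A₂ ^ γ * B₂ ^ (2-γ) := by
    rw [Real.rpow_neg hA₁pos.le, Real.rpow_neg hB₁pos.le, Real.rpow_neg hA₂pos.le,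
      Real.rpow_neg hB₂pos.le, ← mul_inv, ← mul_inv] at hE
    exact inv_injective hE
  have h1rel : A₂^2 = A₁^2 + 4*(co * c₁.re) := by
    rw [hA2sq, hA1sq, hxx, hy₁, hy₂]; ring
  have h2rel : B₂^2 = B₁^2 + 4*(co * c₁.re) := by
    rw [hB2sq, hB1sq, hxx, hy₁, hy₂]; ring
  have hu : co * c₁.re = 0 :=
    key_u_eq_zero γ A₁ B₁ A₂ B₂ _ hγ0 hγ2 hA₁pos hB₁pos hA₂pos hB₂pos h1rel h2rel hF
  have hco : co = 0 := by
    rcases mul_eq_zero.mp hu with h | h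
    · exact h
    · exact absurd h hx₁ne
  have hs2 : s^2 = 1 := by
    rw [hco] at hpyth; linarith [hpyth]
  have hA1v : A₁^2 = 2*γ := by
    rw [hA1sq, hco, hy₁]
    linear_combination hx₁sq + (2*γ-1)*hs2
  have hA2v : A₂^2 = 2*γ := by
    rw [hA2sq, hco, hxx, hy₂]
    linear_combination hx₁sq + (2*γ-1)*hs2
  have hfin : (A₁*A₂)^2 = (2*γ)^2 := by
    rw [mul_pow, hA1v, hA2v]; ring
  exact (sq_eq_sq₀ (by positivity) (by linarith)).mp hfin
end
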